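/- In Euclidean space ℝ^d, for three points x, y, z satisfying dist(x,y) ≤ dist(y,z) ≤ dist(x,z) ≤ A·dist(x,y) with A > 1, one has β²·diam{x,y,z} ∼ δ({x,y,z}) with comparability constants depending only on A, where β is the normalized distance of the middle point from the line through the two extreme points: β = dist(y, line(x,z))/diam{x,y,z} and δ({x,y,z}) = dist(x,y)+dist(y,z)-dist(x,z). -/

import Mathlib

open Metric AffineMap
open scoped RealInnerProductSpace

lemma heron_infDist {E : Type*} [NormedAddCommGroup E] [InnerProductSpace ℝ E]
    (x y z : E) (hxz : x ≠ z) :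
    4 * (dist x z)^2 * (Metric.infDist y (affineSpan ℝ ({x, z} : Set E) : Set E))^2 =
      (dist x y + dist y z + dist x z) * (dist x y + dist x z - dist y z) *
        (dist x y + dist y z - dist x z) * (dist y z + dist x z - dist x y) := by
  set v : E := z - x with hv_def
  set w : E := y - x with hw_def
  have hvnorm : ‖v‖ = dist x z := by rw [hv_def, dist_comm, dist_eq_norm]
  have hwnorm : ‖w‖ = dist x y := by rw [hw_def, dist_comm, dist_eq_norm]
  have hwv : ‖w - v‖ = dist y z := by
    have h1 : w - v = y - z := by rw [hw_def, hv_def]; abel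
    rw [h1, ← dist_eq_norm]
  have hvne : ‖v‖ ≠ 0 := by
    rw [hvnorm]; exact fun h => hxz (dist_eq_zero.mp h)
  set t₀ : ℝ := (⟪w, v⟫) / ‖v‖^2 with ht₀
  have hperp : ⟪w - t₀ • v, v⟫ = 0 := by
    rw [inner_sub_left, real_inner_smul_left, real_inner_self_eq_norm_sq, ht₀]
    field_simp
    ring
  have hS : Nonempty (affineSpan ℝ ({x, z} : Set E)) :=
    ⟨⟨x, left_mem_affineSpan_pair ℝ x z⟩⟩
  have hne : (affineSpan ℝ ({x, z} : Set E) : Set E).Nonempty :=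
    ⟨x, left_mem_affineSpan_pair ℝ x z⟩
  have key : Metric.infDist y (affineSpan ℝ ({x, z} : Set E) : Set E) = ‖w - t₀ • v‖ := by
    apply le_antisymm
    · have hmem : t₀ • v +ᵥ x ∈ affineSpan ℝ ({x, z} : Set E) := by
        rw [vadd_left_mem_affineSpan_pair]
        exact ⟨t₀, by rw [vsub_eq_sub]⟩
      have h1 := Metric.infDist_le_dist_of_mem (x := y) hmem
      have h2 : dist y (t₀ • v +ᵥ x) = ‖w - t₀ • v‖ := by
        rw [vadd_eq_add, dist_eq_norm, hw_def]
        congr 1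
        abel
      rwa [h2] at h1
    · rw [← not_lt, Metric.infDist_lt_iff hne]
      push_neg
      intro p hp
      have hp' : p ∈ affineSpan ℝ ({x, z} : Set E) := hp
      rw [← vsub_vadd p x, vadd_left_mem_affineSpan_pair] at hp'
      obtain ⟨r, hr⟩ := hp'
      have hpx : p = r • v + x := by
        rw [hv_def, ← vsub_eq_sub z x, hr, vsub_eq_sub]; abel
      have hdp : dist y p = ‖w - r • v‖ := by
        rw [hpx, dist_eq_norm, hw_def]
        congr 1
        abel
      rw [hdp]
      have hsplit : w - r • v = (w - t₀ • v) + (t₀ - r) • v := by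
        rw [sub_smul]; abel
      have hsq : ‖w - t₀ • v‖^2 ≤ ‖w - r • v‖^2 := by
        rw [hsplit, norm_add_sq_real, real_inner_smul_right, hperp]
        nlinarith [sq_nonneg ‖(t₀ - r) • v‖]
      have := Real.sqrt_le_sqrt hsq
      rwa [Real.sqrt_sq (norm_nonneg _), Real.sqrt_sq (norm_nonneg _)] at this
  rw [key]
  have hD2 : ‖w - t₀ • v‖^2 = ‖w‖^2 - ⟪w, v⟫^2 / ‖v‖^2 := by
    rw [norm_sub_sq_real, real_inner_smul_right, norm_smul, mul_pow, Real.norm_eq_abs, sq_abs,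
      ht₀]
    field_simp
    ring
  rw [hD2, ← hvnorm, ← hwnorm, ← hwv]
  have hb2 : ‖w - v‖^2 = ‖w‖^2 - 2 * (inner ℝ w v : ℝ) + ‖v‖^2 := norm_sub_sq_real w v
  have hclear : 4 * ‖v‖^2 * (‖w‖^2 - (inner ℝ w v : ℝ)^2 / ‖v‖^2)
      = 4 * (‖w‖^2 * ‖v‖^2 - (inner ℝ w v : ℝ)^2) := by
    field_simp
  rw [hclear]
  linear_combination (-(‖w‖^2 + ‖v‖^2 - ‖w - v‖^2 + 2 * (inner ℝ w v : ℝ))) * hb2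


/-- In Euclidean space, for triples with `dist x y ≤ dist y z ≤ dist x z ≤ A * dist x y`,
one has `β² · diam {x,y,z} ∼ δ({x,y,z})` with constants depending only on `A`, where
`β = dist(y, line(x,z)) / diam` and `δ = dist x y + dist y z - dist x z`. -/
theorem beta_sq_diam_sim_delta (A : ℝ) (hA : 1 < A) :
    ∃ c C : ℝ, 0 < c ∧ 0 < C ∧
      ∀ (d : ℕ) (x y z : EuclideanSpace ℝ (Fin d)),
        dist x y ≤ dist y z → dist y z ≤ dist x z → dist x z ≤ A * dist x y →
        c * (dist x y + dist y z - dist x z) ≤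
            (Metric.infDist y (affineSpan ℝ ({x, z} : Set (EuclideanSpace ℝ (Fin d))) : Set (EuclideanSpace ℝ (Fin d))) /
                max (max (dist x y) (dist y z)) (dist x z)) ^ 2 *
              max (max (dist x y) (dist y z)) (dist x z) ∧
          (Metric.infDist y (affineSpan ℝ ({x, z} : Set (EuclideanSpace ℝ (Fin d))) : Set (EuclideanSpace ℝ (Fin d))) /
                max (max (dist x y) (dist y z)) (dist x z)) ^ 2 *
              max (max (dist x y) (dist y z)) (dist x z) ≤
            C * (dist x y + dist y z - dist x z) := by
  have hA0 : (0:ℝ) < 4 * A := by linarith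
  refine ⟨(4*A)⁻¹, 3, inv_pos.mpr hA0, by norm_num, ?_⟩
  intro d x y z hab hbc hca
  have hM : max (max (dist x y) (dist y z)) (dist x z) = dist x z := by
    rw [max_eq_right hab, max_eq_right hbc]
  rw [hM]
  have htri : dist x z ≤ dist x y + dist y z := dist_triangle x y z
  have hδ : 0 ≤ dist x y + dist y z - dist x z := by linarith
  by_cases hxy : dist x y = 0
  · have hx : x = y := dist_eq_zero.mp hxy
    have hc0 : dist x z = 0 :=
      le_antisymm (by nlinarith [dist_nonneg (x := x) (y := z)]) dist_nonneg
    have hb0 : dist y z = 0 := le_antisymm (hbc.trans hc0.le) dist_nonneg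
    have hymem : y ∈ affineSpan ℝ ({x, z} : Set (EuclideanSpace ℝ (Fin d))) := by
      rw [← hx]; exact left_mem_affineSpan_pair ℝ x z
    have hD : Metric.infDist y
        (affineSpan ℝ ({x, z} : Set (EuclideanSpace ℝ (Fin d))) :
          Set (EuclideanSpace ℝ (Fin d))) = 0 :=
      Metric.infDist_zero_of_mem hymem
    rw [hD, hxy, hb0, hc0]
    norm_num
  · have ha : 0 < dist x y := dist_nonneg.lt_of_ne (Ne.symm hxy)
    have hc : 0 < dist x z := lt_of_lt_of_le ha (hab.trans hbc)
    have hxz : x ≠ z := by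
      intro h; rw [h, dist_self] at hc; exact lt_irrefl _ hc
    have hH := heron_infDist x y z hxz
    set a := dist x y with ha_def
    set b := dist y z with hb_def
    set c := dist x z with hc_def
    set D := Metric.infDist y
      (affineSpan ℝ ({x, z} : Set (EuclideanSpace ℝ (Fin d))) :
        Set (EuclideanSpace ℝ (Fin d))) with hD_def
    have hD0 : 0 ≤ D := Metric.infDist_nonneg
    have hcne : c ≠ 0 := ne_of_gt hc
    have hexp : (D / c) ^ 2 * c = D ^ 2 / c := by
      field_simp
    rw [hexp]
    constructor
    · rw [le_div_iff₀ hc]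
      have l1 : c ≤ a + b + c := by linarith [ha.le, hab]
      have l2 : a ≤ a + c - b := by linarith
      have l3 : c ≤ b + c - a := by linarith
      have hstep : c * (a * ((a + b - c) * c)) ≤
          (a + b + c) * ((a + c - b) * ((a + b - c) * (b + c - a))) := by
        apply mul_le_mul l1 ?_ ?_ (by linarith)
        · apply mul_le_mul l2 ?_ ?_ (by linarith)
          · exact mul_le_mul_of_nonneg_left l3 hδ
          · exact mul_nonneg hδ hc.le
        · exact mul_nonneg ha.le (mul_nonneg hδ hc.le)
      have hq : a * (a + b - c) * c ^ 2 ≤ 4 * (c ^ 2 * D ^ 2) := by nlinarith [hstep, hH]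
      have hq2 : c * (a + b - c) * c ^ 2 ≤ A * (a * (a + b - c) * c ^ 2) := by
        nlinarith [mul_le_mul_of_nonneg_right hca (mul_nonneg hδ (sq_nonneg c))]
      have hq3 : A * (a * (a + b - c) * c ^ 2) ≤ A * (4 * (c ^ 2 * D ^ 2)) :=
        mul_le_mul_of_nonneg_left hq (by linarith)
      have h1 : ((4 * A)⁻¹ * (a + b - c) * c) * (4 * A * c ^ 2) ≤ D ^ 2 * (4 * A * c ^ 2) := by
        have hinv : (4 * A)⁻¹ * (4 * A) = 1 := inv_mul_cancel₀ (ne_of_gt hA0)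
        calc ((4 * A)⁻¹ * (a + b - c) * c) * (4 * A * c ^ 2)
            = ((4 * A)⁻¹ * (4 * A)) * (c * (a + b - c) * c ^ 2) := by ring
          _ = c * (a + b - c) * c ^ 2 := by rw [hinv]; ring
          _ ≤ A * (4 * (c ^ 2 * D ^ 2)) := le_trans hq2 hq3
          _ = D ^ 2 * (4 * A * c ^ 2) := by ring
      exact le_of_mul_le_mul_right h1 (by positivity)
    · rw [div_le_iff₀ hc]
      have u1 : a + b + c ≤ 3 * c := by linarith
      have u2 : a + c - b ≤ c := by linarith
      have u3 : b + c - a ≤ 2 * c := by linarith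
      have hstep2 : (a + b + c) * ((a + c - b) * ((a + b - c) * (b + c - a))) ≤
          (3 * c) * (c * ((a + b - c) * (2 * c))) := by
        apply mul_le_mul u1 ?_ ?_ (by linarith)
        · apply mul_le_mul u2 ?_ ?_ hc.le
          · exact mul_le_mul_of_nonneg_left u3 hδ
          · exact mul_nonneg hδ (by linarith)
        · apply mul_nonneg (by linarith)
          exact mul_nonneg hδ (by linarith)
      have h2 : D ^ 2 * c ^ 2 ≤ (3 * (a + b - c) * c) * c ^ 2 := by
        nlinarith [hstep2, hH, mul_nonneg hδ (mul_nonneg hc.le (mul_nonneg hc.le hc.le))]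
      exact le_of_mul_le_mul_right h2 (by positivity)
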